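/- Let λ, μ > 0, K = λ + μ, M ≥ 1, and define for t ≥ 0 the functions π^t on {0,…,M} by: π^t(0) = μ/K + (λ/K)·e^{−Kt}; for 0 < a < M, π^t(a) = ( −(λ/K)^a·(μ/K) − ∑_{y=1}^{a−1} λ^a·t^y·μ/(y!·K^{a−y+1}) + λ^{a+1}·t^a/(a!·K) )·e^{−Kt} + (λ/K)^a·(μ/K); and π^t(M) = 1 − ∑_{a=0}^{M−1} π^t(a). Then π^0(0) = 1 and π^0(a) = 0 for all 1 ≤ a ≤ M, and for every t ≥ 0 these functions solve the Kolmogorov forward equations of the lumped chain: d/dt π^t(0) = −λ·π^t(0) + μ·∑_{a=1}^{M} π^t(a); d/dt π^t(a) = −(λ+μ)·π^t(a) + λ·π^t(a−1) for 0 < a < M; and d/dt π^t(M) = −μ·π^t(M) + λ·π^t(M−1). -/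

import Mathlib

open scoped BigOperators

noncomputable def Fa (lam mu K : ℝ) (a : ℕ) (t : ℝ) : ℝ :=
  -((lam / K) ^ a * (mu / K))
    - (∑ y ∈ Finset.Icc 1 (a - 1),
        lam ^ a * t ^ y * mu / ((Nat.factorial y : ℝ) * K ^ (a - y + 1)))
    + lam ^ (a + 1) * t ^ a / ((Nat.factorial a : ℝ) * K)

noncomputable def Ga (lam mu K : ℝ) (a : ℕ) (t : ℝ) : ℝ :=
  0 - (∑ y ∈ Finset.Icc 1 (a - 1),
        lam ^ a * ((y : ℝ) * t ^ (y - 1)) * mu / ((Nat.factorial y : ℝ) * K ^ (a - y + 1)))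
    + lam ^ (a + 1) * ((a : ℝ) * t ^ (a - 1)) / ((Nat.factorial a : ℝ) * K)

lemma Fa_hasDerivAt (lam mu K : ℝ) (a : ℕ) (t : ℝ) :
    HasDerivAt (fun s => Fa lam mu K a s) (Ga lam mu K a t) t := by
  unfold Fa Ga
  refine HasDerivAt.add (HasDerivAt.sub (hasDerivAt_const t _) (HasDerivAt.fun_sum ?_)) ?_
  · intro y _
    exact (((hasDerivAt_pow y t).const_mul (lam ^ a)).mul_const mu).div_const _
  · exact ((hasDerivAt_pow a t).const_mul (lam ^ (a+1))).div_const _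

lemma Ga_eq (lam mu K : ℝ) (hK0 : K ≠ 0) (b : ℕ) (hb : 1 ≤ b) (t : ℝ) :
    Ga lam mu K (b+1) t = lam * Fa lam mu K b t := by
  obtain ⟨c, rfl⟩ := Nat.exists_eq_add_of_le' hb
  unfold Fa Ga
  simp only [Nat.add_sub_cancel]
  rw [← Finset.Ico_add_one_right_eq_Icc, Finset.sum_Ico_eq_sum_range,
      ← Finset.Ico_add_one_right_eq_Icc, Finset.sum_Ico_eq_sum_range]
  simp only [Nat.add_sub_cancel, Nat.succ_sub_one]
  rw [Finset.sum_range_succ']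
  have h1 : ∀ k ∈ Finset.range c,
      lam ^ (c + 1 + 1) * (↑(1 + (k+1)) * t ^ (1 + (k+1) - 1)) * mu /
          (↑(1 + (k+1)).factorial * K ^ (c + 1 + 1 - (1 + (k+1)) + 1))
      = lam * (lam ^ (c + 1) * t ^ (1 + k) * mu /
          (↑(1 + k).factorial * K ^ (c + 1 - (1 + k) + 1))) := by
    intro k _
    have e1 : 1 + (k+1) - 1 = 1 + k := by omega
    have e2 : c + 1 + 1 - (1 + (k+1)) + 1 = c + 1 - (1 + k) + 1 := by omega
    have e3 : (1 + (k+1)).factorial = (1+(k+1)) * (1+k).factorial := by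
      rw [show 1+(k+1) = (1+k)+1 by omega]; exact Nat.factorial_succ _
    rw [e1, e2, e3]
    have hf : ((1+k).factorial : ℝ) ≠ 0 := Nat.cast_ne_zero.mpr (Nat.factorial_ne_zero _)
    have hKp : (K : ℝ) ^ (c + 1 - (1 + k) + 1) ≠ 0 := pow_ne_zero _ hK0
    push_cast
    field_simp
    ring
  rw [Finset.sum_congr rfl h1, ← Finset.mul_sum]
  have e4 : (c+1+1).factorial = (c+1+1) * (c+1).factorial := Nat.factorial_succ _
  rw [e4]
  have hf : ((c+1).factorial : ℝ) ≠ 0 := Nat.cast_ne_zero.mpr (Nat.factorial_ne_zero _)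
  have hKp : (K : ℝ) ^ (c + 1 + 1) ≠ 0 := pow_ne_zero _ hK0
  push_cast
  rw [div_pow]
  field_simp
  ring

/-- The explicit transient distribution of the lumped
single-student chain has the correct initial condition and solves the Kolmogorov
forward equations. -/
theorem lumped_transient_solves_forward_equations
    (lam mu K : ℝ) (M : ℕ) (pit : ℝ → ℕ → ℝ)
    (hlam : 0 < lam) (hmu : 0 < mu) (hK : K = lam + mu) (hM : 1 ≤ M)
    (h0 : ∀ t : ℝ, pit t 0 = mu / K + (lam / K) * Real.exp (-(K * t)))
    (hmid : ∀ t : ℝ, ∀ a, 0 < a → a < M →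
      pit t a =
        (-((lam / K) ^ a * (mu / K))
          - (∑ y ∈ Finset.Icc 1 (a - 1),
              lam ^ a * t ^ y * mu / ((Nat.factorial y : ℝ) * K ^ (a - y + 1)))
          + lam ^ (a + 1) * t ^ a / ((Nat.factorial a : ℝ) * K)) * Real.exp (-(K * t))
        + (lam / K) ^ a * (mu / K))
    (hlast : ∀ t : ℝ, pit t M = 1 - ∑ a ∈ Finset.range M, pit t a) :
    (pit 0 0 = 1 ∧ ∀ a, 1 ≤ a → a ≤ M → pit 0 a = 0)
    ∧
    (∀ t : ℝ, 0 ≤ t →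
      HasDerivAt (fun s => pit s 0)
        (-(lam * pit t 0) + mu * ∑ a ∈ Finset.Icc 1 M, pit t a) t
      ∧ (∀ a, 0 < a → a < M →
          HasDerivAt (fun s => pit s a)
            (-((lam + mu) * pit t a) + lam * pit t (a - 1)) t)
      ∧ HasDerivAt (fun s => pit s M)
          (-(mu * pit t M) + lam * pit t (M - 1)) t) := by
  have hK0 : K ≠ 0 := by rw [hK]; positivity
  obtain ⟨m, rfl⟩ : ∃ m, M = m + 1 := ⟨M - 1, by omega⟩
  -- rewrite hmid in terms of Fa
  have hmid' : ∀ t : ℝ, ∀ a, 0 < a → a < m + 1 →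
      pit t a = Fa lam mu K a t * Real.exp (-(K * t)) + (lam / K) ^ a * (mu / K) := by
    intro t a ha haM; rw [hmid t a ha haM]; rfl
  -- initial conditions
  have hinit0 : pit 0 0 = 1 := by
    rw [h0 0]
    simp only [mul_zero, neg_zero, Real.exp_zero, mul_one]
    field_simp
    rw [hK]; ring
  have hinitmid : ∀ a, 1 ≤ a → a < m + 1 → pit 0 a = 0 := by
    intro a ha haM
    rw [hmid 0 a ha haM]
    have hs : (∑ y ∈ Finset.Icc 1 (a - 1),
        lam ^ a * (0:ℝ) ^ y * mu / ((Nat.factorial y : ℝ) * K ^ (a - y + 1))) = 0 := by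
      refine Finset.sum_eq_zero fun y hy => ?_
      have : y ≠ 0 := by have := (Finset.mem_Icc.mp hy).1; omega
      simp [zero_pow this]
    rw [hs]
    have ha0 : a ≠ 0 := by omega
    simp [zero_pow ha0]
  have hinit : pit 0 0 = 1 ∧ ∀ a, 1 ≤ a → a ≤ m + 1 → pit 0 a = 0 := by
    refine ⟨hinit0, fun a ha haM => ?_⟩
    rcases lt_or_eq_of_le haM with h | h
    · exact hinitmid a ha h
    · subst h
      rw [hlast 0, Finset.sum_range_succ']
      have : ∀ i ∈ Finset.range m, pit 0 (i + 1) = 0 := fun i hi =>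
        hinitmid (i + 1) (by omega) (by have := Finset.mem_range.mp hi; omega)
      rw [Finset.sum_congr rfl this, Finset.sum_const_zero, hinit0]
      ring
  refine ⟨hinit, fun t _ => ?_⟩
  have hexp : HasDerivAt (fun s : ℝ => Real.exp (-(K * s)))
      (Real.exp (-(K * t)) * -(K * 1)) t := (((hasDerivAt_id t).const_mul K).neg).exp
  -- sum facts
  have e3 : ∑ i ∈ Finset.range (m + 1), pit t i = 1 - pit t (m + 1) := by
    have := hlast t; linarith
  have e4 : ∑ a ∈ Finset.Icc 1 (m + 1), pit t a = 1 - pit t 0 := by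
    rw [← Finset.Ico_add_one_right_eq_Icc, Finset.sum_Ico_eq_sum_range]
    simp only [Nat.add_sub_cancel]
    have h5 : ∀ i ∈ Finset.range (m + 1), pit t (1 + i) = pit t (i + 1) := by
      intro i _; rw [add_comm]
    rw [Finset.sum_congr rfl h5]
    have h6 := Finset.sum_range_succ' (pit t) (m + 1)
    have h7 := Finset.sum_range_succ (pit t) (m + 1)
    have h8 := hlast t
    -- h6 : ∑_{range (m+2)} = ∑_{i ∈ range (m+1)} pit t (i+1) + pit t 0
    -- h7 : ∑_{range (m+2)} = ∑_{range (m+1)} + pit t (m+1)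
    linarith
  -- derivative at 0
  have hd0 : HasDerivAt (fun s => pit s 0)
      (-(lam * pit t 0) + mu * ∑ a ∈ Finset.Icc 1 (m + 1), pit t a) t := by
    have hfun : (fun s => pit s 0) = fun s => mu / K + (lam / K) * Real.exp (-(K * s)) :=
      funext fun s => h0 s
    rw [hfun]
    have := (hexp.const_mul (lam / K)).const_add (mu / K)
    refine this.congr_deriv ?_
    rw [e4, h0 t, hK]
    field_simp
    ring
  -- derivative at middle a
  have hdm : ∀ a, 0 < a → a < m + 1 →
      HasDerivAt (fun s => pit s a)
        (-((lam + mu) * pit t a) + lam * pit t (a - 1)) t := by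
    intro a ha haM
    have hfun : (fun s => pit s a)
        = fun s => Fa lam mu K a s * Real.exp (-(K * s)) + (lam / K) ^ a * (mu / K) :=
      funext fun s => hmid' s a ha haM
    rw [hfun]
    have hD : HasDerivAt
        (fun s => Fa lam mu K a s * Real.exp (-(K * s)) + (lam / K) ^ a * (mu / K))
        (Ga lam mu K a t * Real.exp (-(K * t)) + Fa lam mu K a t * (Real.exp (-(K * t)) * -(K * 1))) t :=
      ((Fa_hasDerivAt lam mu K a t).mul hexp).add_const _
    convert hD using 1
    rw [hmid' t a ha haM, ← hK]
    rcases Nat.lt_or_ge a 2 with h2 | h2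
    · -- a = 1
      have ha1 : a = 1 := by omega
      subst ha1
      rw [h0 t]
      have hGa : Ga lam mu K 1 t = lam ^ 2 / K := by
        unfold Ga
        norm_num
      rw [hGa]
      unfold Fa
      norm_num
      field_simp
      ring
    · -- a ≥ 2
      obtain ⟨b, rfl⟩ : ∃ b, a = b + 1 := ⟨a - 1, by omega⟩
      have hb1 : 1 ≤ b := by omega
      rw [Ga_eq lam mu K hK0 b hb1 t]
      have hbm : pit t (b + 1 - 1) = Fa lam mu K b t * Real.exp (-(K * t)) + (lam / K) ^ b * (mu / K) := by
        simp only [Nat.add_sub_cancel]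
        exact hmid' t b (by omega) (by omega)
      rw [hbm, pow_succ]
      field_simp
      ring
  refine ⟨hd0, hdm, ?_⟩
  -- derivative at M = m+1
  have hfunM : (fun s => pit s (m + 1)) = fun s => 1 - ∑ a ∈ Finset.range (m + 1), pit s a :=
    funext fun s => hlast s
  set d : ℕ → ℝ := fun a =>
    if a = 0 then -(lam * pit t 0) + mu * ∑ x ∈ Finset.Icc 1 (m + 1), pit t x
    else -((lam + mu) * pit t a) + lam * pit t (a - 1) with hd
  have hsum : HasDerivAt (fun s => ∑ a ∈ Finset.range (m + 1), pit s a)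
      (∑ a ∈ Finset.range (m + 1), d a) t := by
    refine HasDerivAt.fun_sum fun a haM => ?_
    rcases Nat.eq_zero_or_pos a with h | h
    · subst h; simpa [hd] using hd0
    · have haM' : a < m + 1 := Finset.mem_range.mp haM
      have : d a = -((lam + mu) * pit t a) + lam * pit t (a - 1) := by
        simp [hd, Nat.pos_iff_ne_zero.mp h]
      rw [this]
      exact hdm a h haM'
  have hDM : HasDerivAt (fun s => pit s (m + 1))
      (-(∑ a ∈ Finset.range (m + 1), d a)) t := by
    rw [hfunM]
    simpa using hsum.const_sub 1
  convert hDM using 1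
  -- algebra for the last coordinate
  rw [Finset.sum_range_succ']
  have h9 : ∀ i ∈ Finset.range m, d (i + 1)
      = -((lam + mu) * pit t (i + 1)) + lam * pit t i := by
    intro i _
    simp [hd]
  rw [Finset.sum_congr rfl h9]
  have h10 : (∑ i ∈ Finset.range m,
      (-((lam + mu) * pit t (i + 1)) + lam * pit t i))
      = -((lam + mu) * ∑ i ∈ Finset.range m, pit t (i + 1))
        + lam * ∑ i ∈ Finset.range m, pit t i := by
    rw [Finset.sum_add_distrib, ← Finset.mul_sum]
    congr 1
    simp [Finset.mul_sum]
  rw [h10]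
  have e1 : ∑ i ∈ Finset.range m, pit t (i + 1) = (1 - pit t (m + 1)) - pit t 0 := by
    have h := Finset.sum_range_succ' (pit t) m
    linarith [e3]
  have e2 : ∑ i ∈ Finset.range m, pit t i = (1 - pit t (m + 1)) - pit t m := by
    have h := Finset.sum_range_succ (pit t) m
    linarith [e3]
  have hd0' : d 0 = -(lam * pit t 0) + mu * (1 - pit t 0) := by
    simp only [hd, if_pos rfl]  -- d 0
    rw [e4]
  rw [e1, e2, hd0']
  have : m + 1 - 1 = m := by omega
  rw [this]
  ring
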